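/- A multidegree d on the circular curve C of total degree g − 1 (i.e., Σ_i d_i = Σ_i g_i) is semistable if and only if both of the following hold: (a) g_i − 1 ≤ d_i ≤ g_i + 1 for every i ∈ ℤ/γℤ; and (b) either I^+ = I^− = ∅, or both I^+ and I^− are nonempty and their elements alternate in cyclic order around ℤ/γℤ, i.e., for any element of I^− the open cyclic arc from it to the next element of I^− (going once around in the positive direction) contains exactly one element of I^+, and for any element of I^+ the open cyclic arc from it to the next element of I^+ contains exactly one element of I^−. (Lemma 4.2 of the paper.) -/

import Mathlib

open Finset

/-- The number of connected components of the subcurve of a circular curve indexed by `S`: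
the number of `i ∈ S` with `i − 1 ∉ S`. -/
def nCirc {γ : ℕ} (S : Finset (ZMod γ)) : ℕ :=
  (S.filter (fun i => i - 1 ∉ S)).card

/-- The length of the gap from `i` to the next element of `I` in the positive cyclic
direction: the least `m > 0` with `i + m ∈ I`. -/
noncomputable def nextGap {γ : ℕ} (I : Finset (ZMod γ)) (i : ZMod γ) : ℕ :=
  sInf {m : ℕ | 0 < m ∧ (i + (m : ZMod γ)) ∈ I}

/-- The open cyclic arc from `i` to the next element of `I` in the positive cyclic
direction. -/
noncomputable def openArc {γ : ℕ} [DecidableEq (ZMod γ)] (I : Finset (ZMod γ))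
    (i : ZMod γ) : Finset (ZMod γ) :=
  (Finset.Ioo 0 (nextGap I i)).image (fun t : ℕ => i + (t : ZMod γ))

set_option linter.unusedSectionVars false

namespace CircAux

variable {γ : ℕ}

def arcF (i : ZMod γ) (k : ℕ) : Finset (ZMod γ) :=
  (Finset.range k).image (fun t : ℕ => i + (t : ZMod γ))

def psum (e : ZMod γ → ℤ) (i : ZMod γ) (k : ℕ) : ℤ :=
  ∑ t ∈ Finset.range k, e (i + (t : ZMod γ))

lemma cast_inj_lt [NeZero γ] {s t : ℕ} (hs : s < γ) (ht : t < γ)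
    (h : (s : ZMod γ) = t) : s = t := by
  have := congrArg ZMod.val h
  rwa [ZMod.val_cast_of_lt hs, ZMod.val_cast_of_lt ht] at this

lemma addCast_injOn [NeZero γ] (i : ZMod γ) {k : ℕ} (hk : k ≤ γ) :
    Set.InjOn (fun t : ℕ => i + (t : ZMod γ)) (Finset.range k) := by
  intro s hs t ht h
  simp only [Finset.coe_range, Set.mem_Iio] at hs ht
  have : (s : ZMod γ) = t := by
    have := add_left_cancel h
    exact this
  exact cast_inj_lt (lt_of_lt_of_le hs hk) (lt_of_lt_of_le ht hk) this

lemma mem_arcF [NeZero γ] {i x : ZMod γ} {k : ℕ} (hk : k ≤ γ) :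
    x ∈ arcF i k ↔ (x - i).val < k := by
  constructor
  · rintro hx
    simp only [arcF, Finset.mem_image, Finset.mem_range] at hx
    obtain ⟨t, ht, rfl⟩ := hx
    rw [add_sub_cancel_left, ZMod.val_cast_of_lt (lt_of_lt_of_le ht hk)]
    exact ht
  · intro h
    simp only [arcF, Finset.mem_image, Finset.mem_range]
    exact ⟨(x - i).val, h, by rw [ZMod.natCast_rightInverse (x - i)]; ring⟩

lemma card_arcF [NeZero γ] (i : ZMod γ) {k : ℕ} (hk : k ≤ γ) :
    (arcF i k).card = k := by
  rw [arcF, Finset.card_image_of_injOn (addCast_injOn i hk), Finset.card_range]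

lemma sum_arcF [NeZero γ] (e : ZMod γ → ℤ) (i : ZMod γ) {k : ℕ} (hk : k ≤ γ) :
    ∑ x ∈ arcF i k, e x = psum e i k := by
  rw [arcF, Finset.sum_image (fun s hs t ht h => addCast_injOn i hk hs ht h)]
  rfl

lemma psum_add (e : ZMod γ → ℤ) (i : ZMod γ) (k l : ℕ) :
    psum e i (k + l) = psum e i k + psum e (i + (k : ZMod γ)) l := by
  induction l with
  | zero => simp [psum]
  | succ n ih =>
    have h1 : psum e i (k + (n+1)) = psum e i (k+n) + e (i + ((k+n : ℕ) : ZMod γ)) := by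
      rw [show k + (n+1) = (k+n)+1 by omega]; exact Finset.sum_range_succ _ _
    have h2 : psum e (i + (k : ZMod γ)) (n+1)
        = psum e (i + (k : ZMod γ)) n + e (i + (k : ZMod γ) + ((n:ℕ) : ZMod γ)) :=
      Finset.sum_range_succ _ _
    have h3 : i + ((k+n : ℕ) : ZMod γ) = i + (k : ZMod γ) + ((n:ℕ) : ZMod γ) := by
      push_cast; ring
    rw [h1, ih, h2, h3]; ring

lemma arcF_univ [NeZero γ] (i : ZMod γ) : arcF i γ = Finset.univ := by
  apply Finset.eq_univ_of_card
  rw [card_arcF i le_rfl, Fintype.card_eq_nat_card, Nat.card_zmod]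

lemma psum_total [NeZero γ] (e : ZMod γ → ℤ) (i : ZMod γ) :
    psum e i γ = ∑ x, e x := by
  rw [← sum_arcF e i le_rfl, arcF_univ]

lemma sub_one_val [NeZero γ] (a : ZMod γ) (h : a ≠ 0) : (a - 1).val = a.val - 1 := by
  have h1 : 1 ≤ a.val := Nat.one_le_iff_ne_zero.mpr (fun hh => h ((ZMod.val_eq_zero a).mp hh))
  have : a - 1 = ((a.val - 1 : ℕ) : ZMod γ) := by
    rw [Nat.cast_sub h1, Nat.cast_one, ZMod.natCast_rightInverse a]
  rw [this, ZMod.val_cast_of_lt (lt_of_le_of_lt (Nat.sub_le _ _) (ZMod.val_lt a))]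

lemma val_neg_one' [NeZero γ] (h : 1 < γ) : (-1 : ZMod γ).val = γ - 1 := by
  have : (-1 : ZMod γ) = ((γ - 1 : ℕ) : ZMod γ) := by
    rw [Nat.cast_sub (by omega), ZMod.natCast_self, Nat.cast_one, zero_sub]
  rw [this, ZMod.val_cast_of_lt (by omega)]

lemma nCirc_arcF [NeZero γ] (i : ZMod γ) {k : ℕ} (hk1 : 1 ≤ k) (hkγ : k < γ) :
    nCirc (arcF i k) = 1 := by
  have hγ1 : 1 < γ := lt_of_le_of_lt hk1 hkγ
  have hkle : k ≤ γ := le_of_lt hkγ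
  have : (arcF i k).filter (fun x => x - 1 ∉ arcF i k) = {i} := by
    ext x
    simp only [Finset.mem_filter, Finset.mem_singleton, mem_arcF hkle]
    constructor
    · rintro ⟨hx, hx1⟩
      by_contra hne
      have hv : (x - i).val ≠ 0 := fun hz => hne (by
        have := (ZMod.val_eq_zero (x - i)).mp hz
        have : x - i = 0 := this
        linear_combination this)
      apply hx1
      have : x - 1 - i = (x - i) - 1 := by ring
      rw [this, sub_one_val _ (fun hz => hv ((ZMod.val_eq_zero _).mpr hz))]
      omega
    · intro hx
      rw [hx]
      refine ⟨by simp [ZMod.val_zero]; omega, ?_⟩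
      have h4 : i - 1 - i = -1 := by ring
      rw [h4, val_neg_one' hγ1]
      omega
  rw [nCirc, this, Finset.card_singleton]

section gap
variable [NeZero γ] (I : Finset (ZMod γ)) (i : ZMod γ)

lemma gap_set_nonempty (hi : i ∈ I) : {m : ℕ | 0 < m ∧ (i + (m : ZMod γ)) ∈ I}.Nonempty :=
  ⟨γ, Nat.pos_of_ne_zero (NeZero.ne γ), by simpa [ZMod.natCast_self] using hi⟩

lemma gap_pos (hi : i ∈ I) : 0 < nextGap I i :=
  (Nat.sInf_mem (gap_set_nonempty I i hi)).1

lemma gap_mem (hi : i ∈ I) : i + ((nextGap I i : ℕ) : ZMod γ) ∈ I :=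
  (Nat.sInf_mem (gap_set_nonempty I i hi)).2

lemma gap_le (m : ℕ) (hm : 0 < m) (hmem : i + ((m : ℕ) : ZMod γ) ∈ I) :
    nextGap I i ≤ m := Nat.sInf_le ⟨hm, hmem⟩

lemma gap_le_card (hi : i ∈ I) : nextGap I i ≤ γ :=
  gap_le I i γ (Nat.pos_of_ne_zero (NeZero.ne γ)) (by simpa [ZMod.natCast_self] using hi)

lemma gap_min (t : ℕ) (ht : 0 < t) (htlt : t < nextGap I i) :
    i + ((t : ℕ) : ZMod γ) ∉ I := fun hmem => Nat.notMem_of_lt_sInf htlt ⟨ht, hmem⟩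

lemma card_openArc_inter (hi : i ∈ I) (J : Finset (ZMod γ)) :
    ((openArc I i) ∩ J).card
      = ((Finset.Ioo 0 (nextGap I i)).filter (fun t => i + ((t:ℕ) : ZMod γ) ∈ J)).card := by
  have hG : nextGap I i ≤ γ := gap_le_card I i hi
  have hset : (openArc I i) ∩ J
      = ((Finset.Ioo 0 (nextGap I i)).filter (fun t => i + ((t:ℕ) : ZMod γ) ∈ J)).image
          (fun t : ℕ => i + (t : ZMod γ)) := by
    ext x
    simp only [openArc, Finset.mem_inter, Finset.mem_image, Finset.mem_filter, Finset.mem_Ioo]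
    constructor
    · rintro ⟨⟨t, ht, rfl⟩, hxJ⟩
      exact ⟨t, ⟨ht, hxJ⟩, rfl⟩
    · rintro ⟨t, ⟨ht, hxJ⟩, rfl⟩
      exact ⟨⟨t, ht, rfl⟩, hxJ⟩
  rw [hset, Finset.card_image_of_injOn]
  intro s hs t ht h
  simp only [Finset.coe_filter, Set.mem_setOf_eq, Finset.mem_Ioo] at hs ht
  exact cast_inj_lt (lt_of_lt_of_le hs.1.2 hG) (lt_of_lt_of_le ht.1.2 hG)
    (add_left_cancel h)

end gap

end CircAux

namespace CircAux
variable {γ : ℕ}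

lemma psum_one (e : ZMod γ → ℤ) (j : ZMod γ) : psum e j 1 = e j := by
  simp [psum]

lemma neg_one_eq_cast [NeZero γ] (h : 1 ≤ γ) : ((γ - 1 : ℕ) : ZMod γ) = -1 := by
  rw [Nat.cast_sub h, ZMod.natCast_self, Nat.cast_one, zero_sub]

lemma psum_le_one [NeZero γ] (e : ZMod γ → ℤ) (h0 : ∑ x, e x = 0)
    (hArc : ∀ (j : ZMod γ) (k : ℕ), 1 ≤ k → k < γ → -1 ≤ psum e j k)
    (i : ZMod γ) (k : ℕ) (hk1 : 1 ≤ k) (hkγ : k < γ) : psum e i k ≤ 1 := by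
  have hsplit : psum e i (k + (γ - k)) = psum e i k + psum e (i + (k : ZMod γ)) (γ - k) :=
    psum_add e i k (γ - k)
  rw [show k + (γ - k) = γ by omega, psum_total, h0] at hsplit
  have h2 := hArc (i + (k : ZMod γ)) (γ - k) (by omega) (by omega)
  linarith

lemma key [NeZero γ] (hγ : 3 ≤ γ) (e : ZMod γ → ℤ)
    (hval : ∀ j, e j = -1 ∨ e j = 0 ∨ e j = 1)
    (h0 : ∑ x, e x = 0)
    (hArc : ∀ (j : ZMod γ) (k : ℕ), 1 ≤ k → k < γ → -1 ≤ psum e j k)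
    (i : ZMod γ) (hi : e i = -1) :
    ((Finset.Ioo 0 (nextGap (univ.filter (fun j => e j = -1)) i)).filter
      (fun t => e (i + ((t:ℕ) : ZMod γ)) = 1)).card = 1 := by
  set Im : Finset (ZMod γ) := univ.filter (fun j => e j = -1) with hIm
  have hiIm : i ∈ Im := by simp [hIm, hi]
  set G : ℕ := nextGap Im i with hG
  have hG1 : 0 < G := gap_pos Im i hiIm
  have hGγ : G ≤ γ := gap_le_card Im i hiIm
  have hGmem : e (i + ((G : ℕ) : ZMod γ)) = -1 := by
    have := gap_mem Im i hiIm
    simpa [hIm] using this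
  have hGmin : ∀ t : ℕ, 0 < t → t < G → e (i + ((t : ℕ) : ZMod γ)) ≠ -1 := by
    intro t ht htG hcon
    exact gap_min Im i t ht htG (by simp [hIm, hcon])
  set p : ℕ := ((Finset.Ioo 0 G).filter (fun t => e (i + ((t:ℕ) : ZMod γ)) = 1)).card with hp
  -- the sum over the open arc equals p
  have hIoo : Finset.Ioo 0 G = Finset.Ico 1 G := by
    ext t; simp only [Finset.mem_Ioo, Finset.mem_Ico]; omega
  have hsum_arc : ∑ t ∈ Finset.Ioo 0 G, e (i + ((t:ℕ) : ZMod γ)) = (p : ℤ) := by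
    rw [← Finset.sum_filter_add_sum_filter_not (Finset.Ioo 0 G)
      (fun t => e (i + ((t:ℕ) : ZMod γ)) = 1)]
    have h1 : ∑ t ∈ (Finset.Ioo 0 G).filter (fun t => e (i + ((t:ℕ) : ZMod γ)) = 1),
        e (i + ((t:ℕ) : ZMod γ)) = (p : ℤ) := by
      rw [Finset.sum_congr rfl (fun t ht => (Finset.mem_filter.mp ht).2),
        Finset.sum_const, hp]
      simp
    have h2 : ∑ t ∈ (Finset.Ioo 0 G).filter (fun t => ¬ e (i + ((t:ℕ) : ZMod γ)) = 1),
        e (i + ((t:ℕ) : ZMod γ)) = 0 := by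
      apply Finset.sum_eq_zero
      intro t ht
      rw [Finset.mem_filter, Finset.mem_Ioo] at ht
      rcases hval (i + ((t:ℕ) : ZMod γ)) with h | h | h
      · exact absurd h (hGmin t ht.1.1 ht.1.2)
      · exact h
      · exact absurd h ht.2
    rw [h1, h2, add_zero]
  have hps : psum e (i + 1) (G - 1) = (p : ℤ) := by
    rw [← hsum_arc, hIoo, Finset.sum_Ico_eq_sum_range, psum]
    apply Finset.sum_congr rfl
    intro t _
    congr 1
    push_cast
    ring
  -- split on G
  rcases eq_or_lt_of_le hGγ with hGeq | hGlt
  · -- G = γ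
    have h1 : psum e i γ = psum e i 1 + psum e (i + ((1:ℕ) : ZMod γ)) (γ - 1) :=  by
      rw [← psum_add, show 1 + (γ - 1) = γ by omega]
    rw [psum_total, h0, psum_one] at h1
    rw [hGeq] at hps
    rw [Nat.cast_one] at h1
    omega
  · -- G < γ
    rcases Nat.lt_or_ge G 2 with hG2 | hG2
    · -- G = 1 : contradiction
      have hG1' : G = 1 := by omega
      have h21 : psum e i 2 = psum e i 1 + psum e (i + ((1:ℕ) : ZMod γ)) 1 := by
        rw [← psum_add]
      rw [psum_one, psum_one] at h21
      have hGmem1 : e (i + ((1:ℕ) : ZMod γ)) = -1 := by rw [← hG1']; exact hGmem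
      have := hArc i 2 (by omega) (by omega)
      rw [h21, hi, hGmem1] at this
      norm_num at this
    · -- 2 ≤ G
      have hple : (p : ℤ) ≤ 1 := by
        have hsplit : psum e (i+1) ((G-1) + (γ - (G-1)))
            = psum e (i+1) (G-1) + psum e (i + 1 + ((G-1 : ℕ) : ZMod γ)) (γ - (G-1)) :=
          psum_add e (i+1) (G-1) (γ - (G-1))
        rw [show (G-1) + (γ - (G-1)) = γ by omega, psum_total, h0, hps] at hsplit
        have h2 := hArc (i + 1 + ((G-1 : ℕ) : ZMod γ)) (γ - (G-1)) (by omega) (by omega)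
        linarith
      have hpge : 1 ≤ (p : ℤ) := by
        rcases Nat.lt_or_ge G (γ - 1) with hGsmall | hGbig
        · -- G + 1 < γ
          have hsplit : psum e i (1 + ((G-1) + 1))
              = psum e i 1 + (psum e (i+1) (G-1) + psum e (i + 1 + ((G-1:ℕ) : ZMod γ)) 1) := by
            rw [psum_add e i 1 ((G-1)+1), Nat.cast_one, psum_add e (i+1) (G-1) 1]
          rw [psum_one, psum_one, hps, hi] at hsplit
          have harg : i + 1 + ((G-1:ℕ) : ZMod γ) = i + ((G:ℕ) : ZMod γ) := by
            rw [Nat.cast_sub (by omega : 1 ≤ G)]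
            push_cast
            ring
          rw [harg, hGmem] at hsplit
          have := hArc i (1 + ((G-1)+1)) (by omega) (by omega)
          rw [hsplit] at this
          linarith
        · -- G = γ - 1 : contradiction with semistability on the 2-arc {i+G, i+G+1=i}
          have hGval : G = γ - 1 := by omega
          have h21 : psum e (i + ((G:ℕ) : ZMod γ)) 2
              = psum e (i + ((G:ℕ) : ZMod γ)) 1
                + psum e (i + ((G:ℕ) : ZMod γ) + ((1:ℕ) : ZMod γ)) 1 := by
            rw [← psum_add]
          have harg : i + ((G:ℕ) : ZMod γ) + ((1:ℕ) : ZMod γ) = i := by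
            rw [hGval, neg_one_eq_cast (by omega)]
            push_cast
            ring
          rw [psum_one, psum_one, harg, hGmem, hi] at h21
          have := hArc (i + ((G:ℕ) : ZMod γ)) 2 (by omega) (by omega)
          rw [h21] at this
          norm_num at this
      omega

end CircAux

namespace CircAux
variable {γ : ℕ}

lemma invariant [NeZero γ] (e : ZMod γ → ℤ)
    (hval : ∀ j, e j = -1 ∨ e j = 0 ∨ e j = 1)
    (hM : ∀ (j : ZMod γ) (m : ℕ), e j = -1 → 0 < m → e (j + (m : ZMod γ)) = -1 →
      ∃ t : ℕ, 0 < t ∧ t < m ∧ e (j + (t : ZMod γ)) = 1)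
    (hP : ∀ (j : ZMod γ) (m : ℕ), e j = 1 → 0 < m → e (j + (m : ZMod γ)) = 1 →
      ∃ t : ℕ, 0 < t ∧ t < m ∧ e (j + (t : ZMod γ)) = -1)
    (b : ZMod γ) (hb : e b = -1) :
    ∀ k : ℕ, 1 ≤ k → k ≤ γ → -1 ≤ psum e b k ∧ psum e b k ≤ 0 := by
  have main : ∀ k : ℕ, 1 ≤ k → k ≤ γ → ∃ s : ℕ, s < k ∧
      (∀ t : ℕ, s < t → t < k → e (b + (t : ZMod γ)) = 0) ∧
      ((e (b + (s : ZMod γ)) = -1 ∧ psum e b k = -1) ∨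
        (e (b + (s : ZMod γ)) = 1 ∧ psum e b k = 0)) := by
    intro k
    induction k with
    | zero => omega
    | succ n ih =>
      intro h1 hle
      rcases Nat.lt_or_ge n 1 with hn0 | hn1
      · -- n = 0, k = 1
        have hn0' : n = 0 := by omega
        subst hn0'
        refine ⟨0, by omega, by omega, Or.inl ⟨by simpa using hb, ?_⟩⟩
        rw [psum_one]
        exact hb
      · obtain ⟨s, hs, hzero, hcase⟩ := ih hn1 (by omega)
        have hstep : psum e b (n + 1) = psum e b n + e (b + ((n : ℕ) : ZMod γ)) :=
          Finset.sum_range_succ _ _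
        rcases hval (b + ((n : ℕ) : ZMod γ)) with hn | hn | hn
        · -- new term is -1
          rcases hcase with ⟨hsm, hps⟩ | ⟨hsp, hps⟩
          · exfalso
            obtain ⟨t, ht0, htm, hte⟩ := hM (b + ((s : ℕ) : ZMod γ)) (n - s) hsm (by omega)
              (by
                have harg : b + ((s:ℕ) : ZMod γ) + (((n - s : ℕ)) : ZMod γ)
                    = b + ((n:ℕ) : ZMod γ) := by
                  rw [Nat.cast_sub (le_of_lt hs)]
                  push_cast
                  ring
                rw [harg]
                exact hn)
            have harg2 : b + ((s:ℕ) : ZMod γ) + ((t:ℕ) : ZMod γ)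
                = b + (((s + t : ℕ)) : ZMod γ) := by push_cast; ring
            have hz := hzero (s + t) (by omega) (by omega)
            rw [harg2, hz] at hte
            norm_num at hte
          · refine ⟨n, by omega, by omega, Or.inl ⟨hn, ?_⟩⟩
            rw [hstep, hps, hn]
            ring
        · -- new term is 0
          have hps' : psum e b (n + 1) = psum e b n := by rw [hstep, hn, add_zero]
          refine ⟨s, by omega, ?_, ?_⟩
          · intro t hst htn
            rcases Nat.lt_or_ge t n with h | h
            · exact hzero t hst h
            · have : t = n := by omega
              rw [this]
              exact hn
          · rcases hcase with ⟨h1', h2'⟩ | ⟨h1', h2'⟩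
            · exact Or.inl ⟨h1', by rw [hps']; exact h2'⟩
            · exact Or.inr ⟨h1', by rw [hps']; exact h2'⟩
        · -- new term is 1
          rcases hcase with ⟨hsm, hps⟩ | ⟨hsp, hps⟩
          · refine ⟨n, by omega, by omega, Or.inr ⟨hn, ?_⟩⟩
            rw [hstep, hps, hn]
            ring
          · exfalso
            obtain ⟨t, ht0, htm, hte⟩ := hP (b + ((s : ℕ) : ZMod γ)) (n - s) hsp (by omega)
              (by
                have harg : b + ((s:ℕ) : ZMod γ) + (((n - s : ℕ)) : ZMod γ)
                    = b + ((n:ℕ) : ZMod γ) := by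
                  rw [Nat.cast_sub (le_of_lt hs)]
                  push_cast
                  ring
                rw [harg]
                exact hn)
            have harg2 : b + ((s:ℕ) : ZMod γ) + ((t:ℕ) : ZMod γ)
                = b + (((s + t : ℕ)) : ZMod γ) := by push_cast; ring
            have hz := hzero (s + t) (by omega) (by omega)
            rw [harg2, hz] at hte
            norm_num at hte
  intro k hk1 hkγ
  obtain ⟨s, _, _, hcase⟩ := main k hk1 hkγ
  rcases hcase with ⟨_, h⟩ | ⟨_, h⟩ <;> rw [h] <;> norm_num

lemma card_ends_eq_nCirc [NeZero γ] (S : Finset (ZMod γ)) :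
    (S \ S.image (fun x => x - 1)).card = nCirc S := by
  classical
  set S' := S.image (fun x : ZMod γ => x - 1) with hS'
  set S'' := S.image (fun x : ZMod γ => x + 1) with hS''
  have hmemS' : ∀ x : ZMod γ, x ∈ S' ↔ x + 1 ∈ S := by
    intro x
    simp only [hS', Finset.mem_image]
    constructor
    · rintro ⟨c, hc, rfl⟩; simpa using hc
    · intro h; exact ⟨x + 1, h, by ring⟩
  have hmemS'' : ∀ x : ZMod γ, x ∈ S'' ↔ x - 1 ∈ S := by
    intro x
    simp only [hS'', Finset.mem_image]
    constructor
    · rintro ⟨c, hc, rfl⟩; simpa using hc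
    · intro h; exact ⟨x - 1, h, by ring⟩
  have h1 : S ∩ S'' = (S ∩ S').image (fun x => x + 1) := by
    ext x
    simp only [Finset.mem_inter, Finset.mem_image, hmemS'']
    constructor
    · rintro ⟨hx, hx1⟩
      exact ⟨x - 1, ⟨hx1, (hmemS' _).mpr (by simpa using hx)⟩, by ring⟩
    · rintro ⟨c, ⟨hc, hc'⟩, rfl⟩
      exact ⟨(hmemS' _).mp hc', by simpa using hc⟩
  have h2 : (S ∩ S'').card = (S ∩ S').card := by
    rw [h1, Finset.card_image_of_injective _ (add_left_injective 1)]
  have h3 : nCirc S = (S \ S'').card := by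
    rw [nCirc]
    congr 1
    ext x
    simp only [Finset.mem_filter, Finset.mem_sdiff, hmemS'']
  have h4 := Finset.card_sdiff_add_card_inter S S'
  have h5 := Finset.card_sdiff_add_card_inter S S''
  omega

lemma sum_ge_of_pot [NeZero γ] (e : ZMod γ → ℤ) (v : ZMod γ → ℤ)
    (hv : ∀ j, -1 ≤ v j ∧ v j ≤ 0)
    (hcob : ∀ j, e j = v j - v (j - 1)) (S : Finset (ZMod γ)) :
    -(nCirc S : ℤ) ≤ ∑ x ∈ S, e x := by
  classical
  set S' := S.image (fun x : ZMod γ => x - 1) with hS'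
  have h1 : ∑ x ∈ S, e x = ∑ x ∈ S, v x - ∑ x ∈ S', v x := by
    rw [hS', Finset.sum_image (fun a _ b _ h => sub_left_injective h)]
    rw [← Finset.sum_sub_distrib]
    exact Finset.sum_congr rfl (fun x _ => hcob x)
  have h2 : ∑ x ∈ S, v x - ∑ x ∈ S', v x
      = ∑ x ∈ S \ S', v x - ∑ x ∈ S' \ S, v x := by
    rw [← Finset.sum_inter_add_sum_sdiff S S' v, ← Finset.sum_inter_add_sum_sdiff S' S v,
      Finset.inter_comm]
    ring
  have h3 : -(((S \ S').card : ℤ)) ≤ ∑ x ∈ S \ S', v x := by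
    calc -(((S \ S').card : ℤ)) = ∑ _x ∈ S \ S', (-1 : ℤ) := by
          rw [Finset.sum_const]
          simp
      _ ≤ ∑ x ∈ S \ S', v x := Finset.sum_le_sum (fun x _ => (hv x).1)
  have h4 : ∑ x ∈ S' \ S, v x ≤ 0 :=
    Finset.sum_nonpos (fun x _ => (hv x).2)
  have h5 : (S \ S').card = nCirc S := card_ends_eq_nCirc S
  rw [h1, h2]
  rw [← h5]
  linarith

lemma exists_pot [NeZero γ] (hγ : 3 ≤ γ) (e : ZMod γ → ℤ) (h0 : ∑ x, e x = 0)
    (b : ZMod γ) (hb : e b = -1)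
    (hbound : ∀ k : ℕ, 1 ≤ k → k ≤ γ → -1 ≤ psum e b k ∧ psum e b k ≤ 0) :
    ∃ v : ZMod γ → ℤ, (∀ j, -1 ≤ v j ∧ v j ≤ 0) ∧ ∀ j, e j = v j - v (j - 1) := by
  refine ⟨fun j => psum e b ((j - b).val + 1), ?_, ?_⟩
  · intro j
    exact hbound _ (by omega) (by have := ZMod.val_lt (j - b); omega)
  · intro j
    show e j = psum e b ((j - b).val + 1) - psum e b ((j - 1 - b).val + 1)
    by_cases hj : j = b
    · subst hj
      have hz : (j - j).val = 0 := by simp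
      have hneg : (j - 1 - j).val = γ - 1 := by
        rw [show j - 1 - j = -1 by ring, val_neg_one' (by omega)]
      rw [hz, hneg, show γ - 1 + 1 = γ by omega, psum_total, h0, psum_one, hb]
      ring
    · have hvne : (j - b).val ≠ 0 := by
        intro h
        apply hj
        have h2 : j - b = 0 := (ZMod.val_eq_zero _).mp h
        linear_combination h2
      have hv1 : (j - 1 - b).val = (j - b).val - 1 := by
        rw [show j - 1 - b = (j - b) - 1 by ring,
          sub_one_val _ (fun hz => hvne ((ZMod.val_eq_zero _).mpr hz))]
      have hsucc : psum e b ((j - b).val + 1)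
          = psum e b ((j - b).val) + e (b + (((j - b).val : ℕ) : ZMod γ)) :=
        Finset.sum_range_succ _ _
      have harg : b + (((j - b).val : ℕ) : ZMod γ) = j := by
        rw [ZMod.natCast_rightInverse (j - b)]
        ring
      rw [hv1, show (j - b).val - 1 + 1 = (j - b).val by omega, hsucc, harg]
      ring

end CircAux


open CircAux in
/-- Lemma 4.2: a multidegree `d` of total degree `g − 1` on a circular curve is semistable
iff (a) `g i − 1 ≤ d i ≤ g i + 1` for all `i`, and (b) either `I⁺ = I⁻ = ∅` or the elements
of `I⁺` and `I⁻` alternate in cyclic order. -/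
theorem circular_semistable_iff (γ : ℕ) [NeZero γ] (hγ : 3 ≤ γ)
    (g : ZMod γ → ℕ) (d : ZMod γ → ℤ)
    (htotal : ∑ i, d i = ∑ i, (g i : ℤ)) :
    (∀ S : Finset (ZMod γ), S.Nonempty → S ≠ Finset.univ →
        (∑ i ∈ S, d i) ≥ (∑ i ∈ S, (g i : ℤ)) - nCirc S) ↔
      ((∀ i, (g i : ℤ) - 1 ≤ d i ∧ d i ≤ (g i : ℤ) + 1) ∧
        (letI Iminus := Finset.univ.filter (fun i => d i = (g i : ℤ) - 1)
         letI Iplus := Finset.univ.filter (fun i => d i = (g i : ℤ) + 1)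
         (Iminus = ∅ ∧ Iplus = ∅) ∨
           (Iminus.Nonempty ∧ Iplus.Nonempty ∧
             (∀ i ∈ Iminus, ((openArc Iminus i) ∩ Iplus).card = 1) ∧
             (∀ i ∈ Iplus, ((openArc Iplus i) ∩ Iminus).card = 1)))) := by
  classical
  set e : ZMod γ → ℤ := fun i => d i - (g i : ℤ) with he
  have hsum_conv : ∀ S : Finset (ZMod γ),
      ∑ i ∈ S, e i = ∑ i ∈ S, d i - ∑ i ∈ S, (g i : ℤ) := by
    intro S
    simp only [he]
    exact Finset.sum_sub_distrib ..
  have h0 : ∑ x, e x = 0 := by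
    rw [hsum_conv, htotal, sub_self]
  have hImEq : Finset.univ.filter (fun i => d i = (g i : ℤ) - 1)
      = Finset.univ.filter (fun i => e i = -1) := by
    apply Finset.filter_congr
    intro i _
    simp only [he]
    omega
  have hIpEq : Finset.univ.filter (fun i => d i = (g i : ℤ) + 1)
      = Finset.univ.filter (fun i => e i = 1) := by
    apply Finset.filter_congr
    intro i _
    simp only [he]
    omega
  set Im : Finset (ZMod γ) := Finset.univ.filter (fun i => e i = -1) with hIm
  set Ip : Finset (ZMod γ) := Finset.univ.filter (fun i => e i = 1) with hIp
  have hmemIm : ∀ i, i ∈ Im ↔ e i = -1 := by intro i; simp [hIm]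
  have hmemIp : ∀ i, i ∈ Ip ↔ e i = 1 := by intro i; simp [hIp]
  constructor
  · -- forward direction
    intro hss
    have hArc : ∀ (i : ZMod γ) (k : ℕ), 1 ≤ k → k < γ → -1 ≤ psum e i k := by
      intro i k hk1 hkγ
      have hkle : k ≤ γ := le_of_lt hkγ
      have hne : (arcF i k).Nonempty := by
        rw [← Finset.card_pos, card_arcF i hkle]
        omega
      have hproper : arcF i k ≠ Finset.univ := by
        intro h
        have hc := card_arcF i hkle
        rw [h, Finset.card_univ, ZMod.card] at hc
        omega
      have hs := hss (arcF i k) hne hproper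
      rw [nCirc_arcF i hk1 hkγ] at hs
      have hd := hsum_conv (arcF i k)
      have hsf := sum_arcF e i hkle
      push_cast at hs
      linarith
    have hle1 := psum_le_one e h0 hArc
    have hval : ∀ i, e i = -1 ∨ e i = 0 ∨ e i = 1 := by
      intro i
      have h1 := hArc i 1 le_rfl (by omega)
      have h2 := hle1 i 1 le_rfl (by omega)
      rw [psum_one] at h1 h2
      omega
    have ha : ∀ i, (g i : ℤ) - 1 ≤ d i ∧ d i ≤ (g i : ℤ) + 1 := by
      intro i
      have := hval i
      simp only [he] at this
      omega
    refine ⟨ha, ?_⟩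
    rw [hImEq, hIpEq]
    by_cases hminus : Im = ∅
    · left
      have hzero : ∀ i, e i = 0 := by
        have hnonneg : ∀ i ∈ Finset.univ, (0:ℤ) ≤ e i := by
          intro i _
          have h1 : e i ≠ -1 := by
            intro h
            have : i ∈ Im := (hmemIm i).mpr h
            rw [hminus] at this
            simp at this
          have := hval i
          omega
        intro i
        have := (Finset.sum_eq_zero_iff_of_nonneg hnonneg).mp h0 i (Finset.mem_univ i)
        exact this
      refine ⟨hminus, ?_⟩
      rw [Finset.filter_eq_empty_iff]
      intro i _
      rw [hzero i]
      omega
    · right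
      have hImne : Im.Nonempty := Finset.nonempty_of_ne_empty hminus
      have hIpne : Ip.Nonempty := by
        rw [Finset.nonempty_iff_ne_empty]
        intro hempty
        have hnonpos : ∀ i ∈ Finset.univ, e i ≤ 0 := by
          intro i _
          have h1 : e i ≠ 1 := by
            intro h
            have : i ∈ Ip := (hmemIp i).mpr h
            rw [hempty] at this
            simp at this
          have := hval i
          omega
        obtain ⟨b, hb⟩ := hImne
        have hbe : e b = -1 := (hmemIm b).mp hb
        have := (Finset.sum_eq_zero_iff_of_nonpos hnonpos).mp h0 b (Finset.mem_univ b)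
        omega
      refine ⟨hImne, hIpne, ?_, ?_⟩
      · intro i hiIm
        have hie : e i = -1 := (hmemIm i).mp hiIm
        rw [card_openArc_inter Im i hiIm Ip]
        have hfeq : (Finset.Ioo 0 (nextGap Im i)).filter
              (fun t => i + ((t:ℕ) : ZMod γ) ∈ Ip)
            = (Finset.Ioo 0 (nextGap Im i)).filter
              (fun t => e (i + ((t:ℕ) : ZMod γ)) = 1) := by
          apply Finset.filter_congr
          intro t _
          rw [hmemIp]
        rw [hfeq, hIm]
        exact key hγ e hval h0 hArc i hie
      · intro i hiIp
        have hie : e i = 1 := (hmemIp i).mp hiIp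
        set f : ZMod γ → ℤ := fun x => -(e x) with hf
        have hvalf : ∀ j, f j = -1 ∨ f j = 0 ∨ f j = 1 := by
          intro j
          have := hval j
          simp only [hf]
          omega
        have h0f : ∑ x, f x = 0 := by
          simp only [hf]
          rw [Finset.sum_neg_distrib, h0, neg_zero]
        have hArcf : ∀ (j : ZMod γ) (k : ℕ), 1 ≤ k → k < γ → -1 ≤ psum f j k := by
          intro j k hk1 hkγ
          have hpn : psum f j k = -(psum e j k) := by
            simp only [hf, psum]
            rw [Finset.sum_neg_distrib]
          rw [hpn]
          have := hle1 j k hk1 hkγ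
          linarith
        have hIpf : Finset.univ.filter (fun j => f j = -1) = Ip := by
          rw [hIp]
          apply Finset.filter_congr
          intro j _
          simp only [hf]
          omega
        have hkey := key hγ f hvalf h0f hArcf i (by simp only [hf]; omega)
        rw [hIpf] at hkey
        rw [card_openArc_inter Ip i hiIp Im]
        have hfeq : (Finset.Ioo 0 (nextGap Ip i)).filter
              (fun t => i + ((t:ℕ) : ZMod γ) ∈ Im)
            = (Finset.Ioo 0 (nextGap Ip i)).filter
              (fun t => f (i + ((t:ℕ) : ZMod γ)) = 1) := by
          apply Finset.filter_congr
          intro t _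
          rw [hmemIm]
          simp only [hf]
          omega
        rw [hfeq]
        exact hkey
  · -- backward direction
    rintro ⟨ha, hb⟩
    rw [hImEq, hIpEq] at hb
    intro S hSne hSuniv
    have hval : ∀ i, e i = -1 ∨ e i = 0 ∨ e i = 1 := by
      intro i
      have := ha i
      simp only [he]
      omega
    have hkey : -((nCirc S : ℤ)) ≤ ∑ x ∈ S, e x := by
      rcases hb with ⟨hIm0, hIp0⟩ | ⟨hImne, hIpne, hAltM, hAltP⟩
      · have hzero : ∀ i, e i = 0 := by
          intro i
          have h1 : e i ≠ -1 := by
            intro h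
            have : i ∈ Im := (hmemIm i).mpr h
            rw [hIm0] at this
            simp at this
          have h2 : e i ≠ 1 := by
            intro h
            have : i ∈ Ip := (hmemIp i).mpr h
            rw [hIp0] at this
            simp at this
          have := hval i
          omega
        rw [Finset.sum_eq_zero (fun x _ => hzero x)]
        have : (0:ℤ) ≤ (nCirc S : ℤ) := Int.natCast_nonneg _
        linarith
      · obtain ⟨b, hbIm⟩ := hImne
        have hbe : e b = -1 := (hmemIm b).mp hbIm
        have hM : ∀ (j : ZMod γ) (m : ℕ), e j = -1 → 0 < m → e (j + (m : ZMod γ)) = -1 →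
            ∃ t : ℕ, 0 < t ∧ t < m ∧ e (j + (t : ZMod γ)) = 1 := by
          intro j m hj hm hjm
          have hjIm : j ∈ Im := (hmemIm j).mpr hj
          have hle : nextGap Im j ≤ m := gap_le Im j m hm ((hmemIm _).mpr hjm)
          have hcard := hAltM j hjIm
          rw [card_openArc_inter Im j hjIm Ip] at hcard
          have hne : ((Finset.Ioo 0 (nextGap Im j)).filter
              (fun t => j + ((t:ℕ) : ZMod γ) ∈ Ip)).Nonempty := by
            rw [← Finset.card_pos, hcard]
            omega
          obtain ⟨t, ht⟩ := hne
          rw [Finset.mem_filter, Finset.mem_Ioo] at ht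
          exact ⟨t, ht.1.1, lt_of_lt_of_le ht.1.2 hle, (hmemIp _).mp ht.2⟩
        have hP : ∀ (j : ZMod γ) (m : ℕ), e j = 1 → 0 < m → e (j + (m : ZMod γ)) = 1 →
            ∃ t : ℕ, 0 < t ∧ t < m ∧ e (j + (t : ZMod γ)) = -1 := by
          intro j m hj hm hjm
          have hjIp : j ∈ Ip := (hmemIp j).mpr hj
          have hle : nextGap Ip j ≤ m := gap_le Ip j m hm ((hmemIp _).mpr hjm)
          have hcard := hAltP j hjIp
          rw [card_openArc_inter Ip j hjIp Im] at hcard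
          have hne : ((Finset.Ioo 0 (nextGap Ip j)).filter
              (fun t => j + ((t:ℕ) : ZMod γ) ∈ Im)).Nonempty := by
            rw [← Finset.card_pos, hcard]
            omega
          obtain ⟨t, ht⟩ := hne
          rw [Finset.mem_filter, Finset.mem_Ioo] at ht
          exact ⟨t, ht.1.1, lt_of_lt_of_le ht.1.2 hle, (hmemIm _).mp ht.2⟩
        have hbound := invariant e hval hM hP b hbe
        obtain ⟨v, hv, hcob⟩ := exists_pot hγ e h0 b hbe hbound
        exact sum_ge_of_pot e v hv hcob S
    have := hsum_conv S
    linarith
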